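/- Truth-conditional formulas are expressively standard: a formula φ of L is truth-conditional if and only if φ is InqI-equivalent to some standard formula α (i.e., for every intuitionistic Kripke model M and team t, M,t ⊨ φ iff M,t ⊨ α). Moreover, if R(φ) = {α₁,…,αₙ}, then φ has the same truth conditions as the standard disjunction α₁∨⋯∨αₙ: for every intuitionistic Kripke model M and world w, M,w ⊨ φ iff M,w ⊨ α₁∨⋯∨αₙ. -/

import Mathlib

/-- Formulas of the language L: atoms, ⊥, ∧, ∨, →, and inquisitive disjunction ⩾. -/
inductive Formula (P : Type) : Type
  | atom : P → Formula P
  | bot  : Formula P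
  | and  : Formula P → Formula P → Formula P
  | or   : Formula P → Formula P → Formula P
  | impl : Formula P → Formula P → Formula P
  | iorr : Formula P → Formula P → Formula P

namespace Formula

/-- Negation ¬φ := φ → ⊥. -/
def neg {P : Type} (φ : Formula P) : Formula P := Formula.impl φ Formula.bot

/-- Polar question ?φ := φ ⩾ ¬φ. -/
def question {P : Type} (φ : Formula P) : Formula P := Formula.iorr φ φ.neg

/-- A standard formula contains no occurrence of inquisitive disjunction ⩾. -/
def standard {P : Type} : Formula P → Prop
  | atom _ => True
  | bot => True
  | and φ ψ => φ.standard ∧ ψ.standard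
  | or φ ψ => φ.standard ∧ ψ.standard
  | impl φ ψ => φ.standard ∧ ψ.standard
  | iorr _ _ => False

end Formula

/-- An intuitionistic Kripke model: a partially ordered set of worlds with a
persistent valuation. -/
structure KripkeModel (P : Type) where
  W : Type
  R : W → W → Prop
  refl : ∀ w, R w w
  antisymm : ∀ w v, R w v → R v w → w = v
  trans : ∀ w v u, R w v → R v u → R w u
  V : W → P → Prop
  persistent : ∀ w v p, R w v → V w p → V v p

/-- R[t], the up-set generated by a team t. -/
def KripkeModel.upset {P : Type} (M : KripkeModel P) (t : Set M.W) : Set M.W :=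
  {v | ∃ w ∈ t, M.R w v}

/-- The support relation M,t ⊨ φ between teams and formulas. -/
def support {P : Type} (M : KripkeModel P) : Formula P → Set M.W → Prop
  | .atom p, t => ∀ w ∈ t, M.V w p
  | .bot, t => t = ∅
  | .and φ ψ, t => support M φ t ∧ support M ψ t
  | .or φ ψ, t => ∃ t₁ t₂, t = t₁ ∪ t₂ ∧ support M φ t₁ ∧ support M ψ t₂
  | .impl φ ψ, t => ∀ t', t' ⊆ M.upset t → support M φ t' → support M ψ t'
  | .iorr φ ψ, t => support M φ t ∨ support M ψ t

/-- Truth at a world: M,w ⊨ φ iff M,{w} ⊨ φ. -/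
def truth {P : Type} (M : KripkeModel P) (w : M.W) (φ : Formula P) : Prop :=
  support M φ {w}

/-- A formula is truth-conditional if support at a team amounts to truth at each world. -/
def truthConditional {P : Type} (φ : Formula P) : Prop :=
  ∀ (M : KripkeModel P) (t : Set M.W), support M φ t ↔ ∀ w ∈ t, truth M w φ

/-- The partial truth-value function: `tvalIs M w φ b` says T(w,φ) is defined with value b
(b = true for value 1, i.e. M,w ⊨ φ; b = false for value 0, i.e. M,w ⊨ ¬φ). -/
def tvalIs {P : Type} (M : KripkeModel P) (w : M.W) (φ : Formula P) : Bool → Prop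
  | true => truth M w φ
  | false => truth M w φ.neg

/-- Big conjunction of a list of formulas (empty conjunction is the verum ⊥→⊥). -/
def bigConj {P : Type} : List (Formula P) → Formula P
  | [] => Formula.impl Formula.bot Formula.bot
  | [φ] => φ
  | φ :: ψ :: rest => Formula.and φ (bigConj (ψ :: rest))

/-- Big disjunction (with ∨) of a list of formulas. -/
def bigDisj {P : Type} : List (Formula P) → Formula P
  | [] => Formula.bot
  | [φ] => φ
  | φ :: ψ :: rest => Formula.or φ (bigDisj (ψ :: rest))

/-- All ways of choosing, for each element `a` of the second list, a pair `(a,b)`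
with `b` from the first list; these represent the functions f : R(φ) → R(ψ). -/
def selections {P : Type} (bs : List (Formula P)) :
    List (Formula P) → List (List (Formula P × Formula P))
  | [] => [[]]
  | a :: rest => (selections bs rest).flatMap (fun s => bs.map (fun b => (a, b) :: s))

/-- The resolutions R(φ) of a formula φ. -/
def resolutions {P : Type} : Formula P → List (Formula P)
  | .atom p => [.atom p]
  | .bot => [.bot]
  | .and φ ψ => (resolutions φ).flatMap (fun a => (resolutions ψ).map (fun b => .and a b))
  | .or φ ψ => (resolutions φ).flatMap (fun a => (resolutions ψ).map (fun b => .or a b))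
  | .impl φ ψ => (selections (resolutions ψ) (resolutions φ)).map
      (fun s => bigConj (s.map (fun ab => Formula.impl ab.1 ab.2)))
  | .iorr φ ψ => resolutions φ ++ resolutions ψ

section Aux

variable {P : Type}

lemma upset_mono (M : KripkeModel P) {t t' : Set M.W} (h : t' ⊆ t) :
    M.upset t' ⊆ M.upset t := by
  rintro v ⟨w, hw, hr⟩; exact ⟨w, h hw, hr⟩

lemma upset_empty (M : KripkeModel P) : M.upset (∅ : Set M.W) = ∅ := by
  ext v; simp [KripkeModel.upset]

lemma support_empty (M : KripkeModel P) (φ : Formula P) : support M φ (∅ : Set M.W) := by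
  induction φ with
  | atom p => intro w hw; exact absurd hw (by simp)
  | bot => rfl
  | and φ ψ ih1 ih2 => exact ⟨ih1, ih2⟩
  | or φ ψ ih1 ih2 => exact ⟨∅, ∅, by simp, ih1, ih2⟩
  | impl φ ψ ih1 ih2 =>
      intro t' ht' _
      have : t' = ∅ := Set.eq_empty_of_subset_empty (by rwa [upset_empty] at ht')
      subst this; exact ih2
  | iorr φ ψ ih1 ih2 => exact Or.inl ih1

lemma support_mono (M : KripkeModel P) (φ : Formula P) {t t' : Set M.W}
    (h : t' ⊆ t) (hs : support M φ t) : support M φ t' := by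
  induction φ generalizing t t' with
  | atom p => intro w hw; exact hs w (h hw)
  | bot => subst hs; exact Set.eq_empty_of_subset_empty h
  | and φ ψ ih1 ih2 => exact ⟨ih1 h hs.1, ih2 h hs.2⟩
  | or φ ψ ih1 ih2 =>
      obtain ⟨t1, t2, ht, h1, h2⟩ := hs
      refine ⟨t' ∩ t1, t' ∩ t2, ?_, ih1 Set.inter_subset_right h1,
        ih2 Set.inter_subset_right h2⟩
      ext v
      constructor
      · intro hv
        have := h hv; rw [ht] at this
        rcases this with hv1 | hv2
        · exact Or.inl ⟨hv, hv1⟩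
        · exact Or.inr ⟨hv, hv2⟩
      · rintro (⟨hv, _⟩ | ⟨hv, _⟩) <;> exact hv
  | impl φ ψ ih1 ih2 =>
      intro s hs' hφ
      exact hs s (hs'.trans (upset_mono M h)) hφ
  | iorr φ ψ ih1 ih2 =>
      rcases hs with h1 | h2
      · exact Or.inl (ih1 h h1)
      · exact Or.inr (ih2 h h2)

lemma truth_of_support {M : KripkeModel P} {φ : Formula P} {t : Set M.W} {w : M.W}
    (hw : w ∈ t) (hs : support M φ t) : truth M w φ :=
  support_mono M φ (Set.singleton_subset_iff.mpr hw) hs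

/-- Standard formulas are truth-conditional. -/
lemma standard_tc {α : Formula P} (h : α.standard) :
    ∀ (M : KripkeModel P) (t : Set M.W), support M α t ↔ ∀ w ∈ t, truth M w α := by
  induction α with
  | atom p =>
      intro M t
      constructor
      · intro hs w hw v hv
        rcases hv with rfl; exact hs _ hw
      · intro H w hw; exact H w hw w rfl
  | bot =>
      intro M t
      constructor
      · rintro rfl w hw; exact absurd hw (by simp)
      · intro H
        ext w; simp only [Set.mem_empty_iff_false, iff_false]
        intro hw
        have := H w hw
        have : ({w} : Set M.W) = ∅ := this
        exact absurd (Set.singleton_nonempty w) (by rw [this]; simp)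
  | and φ ψ ih1 ih2 =>
      intro M t
      obtain ⟨h1, h2⟩ := h
      constructor
      · rintro ⟨s1, s2⟩ w hw
        exact ⟨(ih1 h1 M {w}).mpr (fun v hv => by rcases hv with rfl; exact truth_of_support hw s1),
               (ih2 h2 M {w}).mpr (fun v hv => by rcases hv with rfl; exact truth_of_support hw s2)⟩
      · intro H
        refine ⟨(ih1 h1 M t).mpr ?_, (ih2 h2 M t).mpr ?_⟩
        · intro w hw; exact (H w hw).1
        · intro w hw; exact (H w hw).2
  | or φ ψ ih1 ih2 =>
      intro M t
      obtain ⟨h1, h2⟩ := h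
      constructor
      · rintro ⟨t1, t2, ht, s1, s2⟩ w hw
        rw [ht] at hw
        rcases hw with hw | hw
        · exact ⟨{w}, ∅, by simp, truth_of_support hw s1, support_empty M ψ⟩
        · exact ⟨∅, {w}, by simp, support_empty M φ, truth_of_support hw s2⟩
      · intro H
        refine ⟨{w ∈ t | support M φ {w}}, {w ∈ t | support M ψ {w}}, ?_, ?_, ?_⟩
        · ext w
          constructor
          · intro hw
            obtain ⟨t1, t2, ht, s1, s2⟩ := H w hw
            have hw1 : w ∈ t1 ∪ t2 := by rw [← ht]; rfl
            rcases hw1 with hw1 | hw1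
            · exact Or.inl ⟨hw, truth_of_support hw1 s1⟩
            · exact Or.inr ⟨hw, truth_of_support hw1 s2⟩
          · rintro (⟨hw, _⟩ | ⟨hw, _⟩) <;> exact hw
        · exact (ih1 h1 M _).mpr (fun w hw => hw.2)
        · exact (ih2 h2 M _).mpr (fun w hw => hw.2)
  | impl φ ψ ih1 ih2 =>
      intro M t
      obtain ⟨h1, h2⟩ := h
      constructor
      · intro hs w hw t' ht' hφ
        refine hs t' (ht'.trans ?_) hφ
        rintro v ⟨u, hu, hr⟩
        rcases hu with rfl; exact ⟨_, hw, hr⟩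
      · intro H t' ht' hφ
        refine (ih2 h2 M t').mpr ?_
        intro v hv
        obtain ⟨w, hw, hr⟩ := ht' hv
        refine H w hw {v} ?_ (truth_of_support hv hφ)
        intro u hu; rcases hu with rfl; exact ⟨w, rfl, hr⟩
  | iorr φ ψ ih1 ih2 => exact absurd h (by simp [Formula.standard])

lemma bigConj_standard : ∀ l : List (Formula P), (∀ a ∈ l, a.standard) →
    (bigConj l).standard := by
  intro l
  induction l with
  | nil => intro _; exact ⟨trivial, trivial⟩
  | cons a l ih =>
      intro h
      cases l with
      | nil => exact h a (by simp)
      | cons b rest =>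
          exact ⟨h a (by simp), ih (fun x hx => h x (List.mem_cons_of_mem _ hx))⟩

lemma bigDisj_standard : ∀ l : List (Formula P), (∀ a ∈ l, a.standard) →
    (bigDisj l).standard := by
  intro l
  induction l with
  | nil => intro _; trivial
  | cons a l ih =>
      intro h
      cases l with
      | nil => exact h a (by simp)
      | cons b rest =>
          exact ⟨h a (by simp), ih (fun x hx => h x (List.mem_cons_of_mem _ hx))⟩

lemma selections_mem {bs : List (Formula P)} :
    ∀ {as : List (Formula P)} {s}, s ∈ selections bs as →
      ∀ p ∈ s, p.1 ∈ as ∧ p.2 ∈ bs := by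
  intro as
  induction as with
  | nil => intro s hs p hp; simp [selections] at hs; subst hs; simp at hp
  | cons a rest ih =>
      intro s hs p hp
      simp only [selections, List.mem_flatMap, List.mem_map] at hs
      obtain ⟨s', hs', b, hb, rfl⟩ := hs
      rcases List.mem_cons.mp hp with rfl | hp
      · exact ⟨by simp, hb⟩
      · obtain ⟨h1, h2⟩ := ih hs' p hp
        exact ⟨List.mem_cons_of_mem _ h1, h2⟩

lemma selections_cover {bs : List (Formula P)} :
    ∀ {as : List (Formula P)} {s}, s ∈ selections bs as →
      ∀ a ∈ as, ∃ b ∈ bs, (a, b) ∈ s := by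
  intro as
  induction as with
  | nil => intro s _ a ha; simp at ha
  | cons a rest ih =>
      intro s hs x hx
      simp only [selections, List.mem_flatMap, List.mem_map] at hs
      obtain ⟨s', hs', b, hb, rfl⟩ := hs
      rcases List.mem_cons.mp hx with rfl | hx
      · exact ⟨b, hb, by simp⟩
      · obtain ⟨b', hb', hmem⟩ := ih hs' x hx
        exact ⟨b', hb', List.mem_cons_of_mem _ hmem⟩

lemma selections_exists {bs : List (Formula P)} (Q : Formula P → Formula P → Prop) :
    ∀ as : List (Formula P), (∀ a ∈ as, ∃ b ∈ bs, Q a b) →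
      ∃ s ∈ selections bs as, ∀ p ∈ s, Q p.1 p.2 := by
  intro as
  induction as with
  | nil => intro _; exact ⟨[], by simp [selections], by simp⟩
  | cons a rest ih =>
      intro h
      obtain ⟨s, hs, hq⟩ := ih (fun x hx => h x (List.mem_cons_of_mem _ hx))
      obtain ⟨b, hb, hqb⟩ := h a List.mem_cons_self
      refine ⟨(a, b) :: s, ?_, ?_⟩
      · simp only [selections, List.mem_flatMap, List.mem_map]
        exact ⟨s, hs, b, hb, rfl⟩
      · intro p hp
        rcases List.mem_cons.mp hp with rfl | hp
        · exact hqb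
        · exact hq p hp

lemma resolutions_standard (φ : Formula P) : ∀ a ∈ resolutions φ, a.standard := by
  induction φ with
  | atom p => simp [resolutions, Formula.standard]
  | bot => simp [resolutions, Formula.standard]
  | and φ ψ ih1 ih2 =>
      intro a ha
      simp only [resolutions, List.mem_flatMap, List.mem_map] at ha
      obtain ⟨x, hx, y, hy, rfl⟩ := ha
      exact ⟨ih1 x hx, ih2 y hy⟩
  | or φ ψ ih1 ih2 =>
      intro a ha
      simp only [resolutions, List.mem_flatMap, List.mem_map] at ha
      obtain ⟨x, hx, y, hy, rfl⟩ := ha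
      exact ⟨ih1 x hx, ih2 y hy⟩
  | impl φ ψ ih1 ih2 =>
      intro a ha
      simp only [resolutions, List.mem_map] at ha
      obtain ⟨s, hs, rfl⟩ := ha
      refine bigConj_standard _ ?_
      intro c hc
      simp only [List.mem_map] at hc
      obtain ⟨p, hp, rfl⟩ := hc
      obtain ⟨h1, h2⟩ := selections_mem hs p hp
      exact ⟨ih1 _ h1, ih2 _ h2⟩
  | iorr φ ψ ih1 ih2 =>
      intro a ha
      rcases List.mem_append.mp ha with h | h
      · exact ih1 a h
      · exact ih2 a h

lemma support_bigConj (M : KripkeModel P) :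
    ∀ (l : List (Formula P)) (t : Set M.W),
      support M (bigConj l) t ↔ ∀ a ∈ l, support M a t := by
  intro l
  induction l with
  | nil =>
      intro t
      simp only [bigConj, List.not_mem_nil, false_implies, implies_true, iff_true]
      intro t' _ h
      exact h
  | cons a l ih =>
      intro t
      cases l with
      | nil => simp [bigConj]
      | cons b rest =>
          simp only [bigConj]
          constructor
          · rintro ⟨h1, h2⟩ c hc
            rcases List.mem_cons.mp hc with rfl | hc
            · exact h1
            · exact (ih t).mp h2 c hc
          · intro H
            exact ⟨H a (by simp), (ih t).mpr (fun c hc => H c (List.mem_cons_of_mem _ hc))⟩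

lemma support_bigDisj_singleton (M : KripkeModel P) :
    ∀ (l : List (Formula P)) (w : M.W),
      support M (bigDisj l) {w} ↔ ∃ a ∈ l, support M a {w} := by
  intro l
  induction l with
  | nil =>
      intro w
      simp only [bigDisj, List.not_mem_nil, false_and, exists_false, iff_false]
      intro h
      have : ({w} : Set M.W) = ∅ := h
      exact absurd (Set.singleton_nonempty w) (by rw [this]; simp)
  | cons a l ih =>
      intro w
      cases l with
      | nil => simp [bigDisj]
      | cons b rest =>
          simp only [bigDisj]
          constructor
          · rintro ⟨t1, t2, ht, s1, s2⟩
            have hw : w ∈ t1 ∪ t2 := by rw [← ht]; rfl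
            rcases hw with hw | hw
            · exact ⟨a, by simp, truth_of_support hw s1⟩
            · obtain ⟨c, hc, hsc⟩ := (ih w).mp (truth_of_support hw s2)
              exact ⟨c, List.mem_cons_of_mem _ hc, hsc⟩
          · rintro ⟨c, hc, hsc⟩
            rcases List.mem_cons.mp hc with rfl | hc
            · exact ⟨{w}, ∅, by simp, hsc, support_empty M _⟩
            · exact ⟨∅, {w}, by simp, support_empty M _, (ih w).mpr ⟨c, hc, hsc⟩⟩

/-- The resolution theorem: support of φ amounts to support of some resolution. -/
theorem support_resolutions (φ : Formula P) (M : KripkeModel P) (t : Set M.W) :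
    support M φ t ↔ ∃ a ∈ resolutions φ, support M a t := by
  induction φ generalizing t with
  | atom p => simp [resolutions]
  | bot => simp [resolutions]
  | and φ ψ ih1 ih2 =>
      constructor
      · rintro ⟨s1, s2⟩
        obtain ⟨a, ha, hsa⟩ := (ih1 t).mp s1
        obtain ⟨b, hb, hsb⟩ := (ih2 t).mp s2
        refine ⟨.and a b, ?_, hsa, hsb⟩
        simp only [resolutions, List.mem_flatMap, List.mem_map]
        exact ⟨a, ha, b, hb, rfl⟩
      · rintro ⟨c, hc, sc⟩
        simp only [resolutions, List.mem_flatMap, List.mem_map] at hc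
        obtain ⟨a, ha, b, hb, rfl⟩ := hc
        exact ⟨(ih1 t).mpr ⟨a, ha, sc.1⟩, (ih2 t).mpr ⟨b, hb, sc.2⟩⟩
  | or φ ψ ih1 ih2 =>
      constructor
      · rintro ⟨t1, t2, ht, s1, s2⟩
        obtain ⟨a, ha, hsa⟩ := (ih1 t1).mp s1
        obtain ⟨b, hb, hsb⟩ := (ih2 t2).mp s2
        refine ⟨.or a b, ?_, t1, t2, ht, hsa, hsb⟩
        simp only [resolutions, List.mem_flatMap, List.mem_map]
        exact ⟨a, ha, b, hb, rfl⟩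
      · rintro ⟨c, hc, sc⟩
        simp only [resolutions, List.mem_flatMap, List.mem_map] at hc
        obtain ⟨a, ha, b, hb, rfl⟩ := hc
        obtain ⟨t1, t2, ht, s1, s2⟩ := sc
        exact ⟨t1, t2, ht, (ih1 t1).mpr ⟨a, ha, s1⟩, (ih2 t2).mpr ⟨b, hb, s2⟩⟩
  | impl φ ψ ih1 ih2 =>
      constructor
      · intro hs
        have key : ∀ a ∈ resolutions φ, ∃ b ∈ resolutions ψ,
            support M (Formula.impl a b) t := by
          intro a ha
          set sa : Set M.W := {v ∈ M.upset t | truth M v a} with hsa_def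
          have hsa_sub : sa ⊆ M.upset t := fun v hv => hv.1
          have hsupp_a : support M a sa :=
            (standard_tc (resolutions_standard φ a ha) M sa).mpr (fun v hv => hv.2)
          have hφ : support M φ sa := (ih1 sa).mpr ⟨a, ha, hsupp_a⟩
          have hψ : support M ψ sa := hs sa hsa_sub hφ
          obtain ⟨b, hb, hsb⟩ := (ih2 sa).mp hψ
          refine ⟨b, hb, ?_⟩
          intro t' ht' hta
          have hsub : t' ⊆ sa := fun v hv => ⟨ht' hv, truth_of_support hv hta⟩
          exact support_mono M b hsub hsb
        obtain ⟨s, hsmem, hQ⟩ := selections_exists _ _ key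
        refine ⟨bigConj (s.map fun ab => Formula.impl ab.1 ab.2), ?_, ?_⟩
        · simp only [resolutions, List.mem_map]
          exact ⟨s, hsmem, rfl⟩
        · rw [support_bigConj]
          intro c hc
          simp only [List.mem_map] at hc
          obtain ⟨⟨a, b⟩, hab, rfl⟩ := hc
          exact hQ _ hab
      · rintro ⟨c, hc, sc⟩
        simp only [resolutions, List.mem_map] at hc
        obtain ⟨s, hs, rfl⟩ := hc
        intro t' ht' hφ
        obtain ⟨a, ha, hsa⟩ := (ih1 t').mp hφ
        obtain ⟨b, hb, hmem⟩ := selections_cover hs a ha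
        have himp : support M (Formula.impl a b) t := by
          refine (support_bigConj M _ t).mp sc _ ?_
          simp only [List.mem_map]
          exact ⟨(a, b), hmem, rfl⟩
        exact (ih2 t').mpr ⟨b, hb, himp t' ht' hsa⟩
  | iorr φ ψ ih1 ih2 =>
      constructor
      · rintro (h | h)
        · obtain ⟨a, ha, hsa⟩ := (ih1 t).mp h
          exact ⟨a, List.mem_append.mpr (Or.inl ha), hsa⟩
        · obtain ⟨a, ha, hsa⟩ := (ih2 t).mp h
          exact ⟨a, List.mem_append.mpr (Or.inr ha), hsa⟩
      · rintro ⟨a, ha, hsa⟩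
        rcases List.mem_append.mp ha with h | h
        · exact Or.inl ((ih1 t).mpr ⟨a, h, hsa⟩)
        · exact Or.inr ((ih2 t).mpr ⟨a, h, hsa⟩)

end Aux

/-- a formula is truth-conditional iff it is equivalent to some
standard formula; moreover φ has the same truth conditions as the standard
disjunction of its resolutions. -/
theorem truthConditional_iff_standard {P : Type} (φ : Formula P) :
    (truthConditional φ ↔
      ∃ α : Formula P, α.standard ∧
        ∀ (M : KripkeModel P) (t : Set M.W), (support M φ t ↔ support M α t)) ∧
    (∀ (M : KripkeModel P) (w : M.W),
      truth M w φ ↔ truth M w (bigDisj (resolutions φ))) := by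
  have hstd : (bigDisj (resolutions φ)).standard :=
    bigDisj_standard _ (resolutions_standard φ)
  have part2 : ∀ (M : KripkeModel P) (w : M.W),
      truth M w φ ↔ truth M w (bigDisj (resolutions φ)) := by
    intro M w
    show support M φ {w} ↔ support M (bigDisj (resolutions φ)) {w}
    rw [support_resolutions, support_bigDisj_singleton]
  refine ⟨⟨?_, ?_⟩, part2⟩
  · intro htc
    refine ⟨bigDisj (resolutions φ), hstd, ?_⟩
    intro M t
    rw [htc M t, standard_tc hstd M t]
    exact forall_congr' fun w => imp_congr_right fun _ => part2 M w
  · rintro ⟨α, hα, heq⟩ M t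
    rw [heq M t, standard_tc hα M t]
    refine forall_congr' fun w => imp_congr_right fun _ => ?_
    show support M α {w} ↔ support M φ {w}
    exact (heq M {w}).symm
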